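/- Structure theorem, second version: Let G be an abelian group and ≾ a total quasi-order on G. Then ≾ satisfies (Q1) and (Q2) if and only if G admits a subgroup H such that: (1) H is an initial segment of G; (2) ≾ restricted to H is a total order making (H,≾) an ordered abelian group; (3') ≾ induces a well-defined quasi-order on G/H via g + H ≾ h + H ⇔ g − h ∈ H ∨ (g − h ∉ H ∧ g ≾ h), and this induced quasi-order on G/H is valuational; (4) for all g, h ∈ G, if g ∉ H and g − h ∈ H then g ∼ h. -/

import Mathlib

universe u

variable {G : Type u} [AddCommGroup G]

/-- `r` is a total quasi-order: reflexive, transitive, any two elements comparable. -/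
def TotalQO (r : G → G → Prop) : Prop :=
  (∀ x, r x x) ∧ (∀ x y z, r x y → r y z → r x z) ∧ (∀ x y, r x y ∨ r y x)

/-- Axiom (Q1): `x ∼ 0 → x = 0`. -/
def AxQ1 (r : G → G → Prop) : Prop := ∀ x, r x 0 → r 0 x → x = 0

/-- Axiom (Q2): `x ≾ y ∧ ¬(y ∼ z) → x + z ≾ y + z`. -/
def AxQ2 (r : G → G → Prop) : Prop :=
  ∀ x y z, r x y → ¬(r y z ∧ r z y) → r (x + z) (y + z)

/-- A compatible quasi-ordered abelian group: a total quasi-order satisfying (Q1) and (Q2). -/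
def Compatible (r : G → G → Prop) : Prop := TotalQO r ∧ AxQ1 r ∧ AxQ2 r

/-- `g` is o-type: its `∼`-class is a singleton and `g` does not have order 2. -/
def OType (r : G → G → Prop) (g : G) : Prop :=
  (∀ h, r h g → r g h → h = g) ∧ (g + g = 0 → g = 0)

/-- `g` is v-type: its `∼`-class is not a singleton, or `g + g = 0`. -/
def VType (r : G → G → Prop) (g : G) : Prop :=
  (∃ h, h ≠ g ∧ r h g ∧ r g h) ∨ g + g = 0

/-- A group valuation with values in `WithTop Γ` (`⊤` playing the role of `∞`). -/
def IsValuation {A : Type u} [AddCommGroup A] {Γ : Type u} [LinearOrder Γ]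
    (v : A → WithTop Γ) : Prop :=
  (∀ g, v g = ⊤ ↔ g = 0) ∧ (∀ g, v (-g) = v g) ∧
  (∀ g h, min (v g) (v h) ≤ v (g + h))

/-- A quasi-order is valuational if it is induced by some valuation:
`g ≾ h ↔ v g ≥ v h`. -/
def Valuational {A : Type u} [AddCommGroup A] (r : A → A → Prop) : Prop :=
  ∃ (Γ : Type u) (_ : LinearOrder Γ) (v : A → WithTop Γ),
    IsValuation v ∧ ∀ g h, r g h ↔ v h ≤ v g

set_option linter.unusedSectionVars false
set_option linter.unusedVariables false

namespace StructAux

variable {G : Type u} [AddCommGroup G] {r : G → G → Prop}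

/-- v-type predicate -/
def Vt (r : G → G → Prop) (g : G) : Prop := (r g (-g) ∧ r (-g) g) ∧ g ≠ 0

section Basic

theorem rrefl (ht : TotalQO r) (x : G) : r x x := ht.1 x
theorem rtrans (ht : TotalQO r) {x y z : G} (a : r x y) (b : r y z) : r x z := ht.2.1 x y z a b
theorem rtot' (ht : TotalQO r) {x y : G} (h : ¬ r x y) : r y x := (ht.2.2 x y).resolve_left h

theorem factA (ht : TotalQO r) (h1 : AxQ1 r) (h2 : AxQ2 r) {g : G} (hg : r g 0) :
    r 0 (-g) := by
  by_cases hg0 : g = 0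
  · subst hg0; simpa using rrefl ht (0 : G)
  · have hn : ¬ (r 0 (-g) ∧ r (-g) 0) := by
      rintro ⟨a, b⟩
      exact hg0 (by simpa using h1 (-g) b a)
    simpa using h2 g 0 (-g) hg hn

/-- If `h ∼ g` with `h ≠ g`, then `g ∼ -g`. -/
theorem D1 (ht : TotalQO r) (h1 : AxQ1 r) (h2 : AxQ2 r) {g h : G}
    (hhg : r h g) (hgh : r g h) (hne : h ≠ g) : r g (-g) ∧ r (-g) g := by
  by_contra hns
  have hns2 : ¬ (r h (-g) ∧ r (-g) h) := by
    rintro ⟨a, b⟩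
    exact hns ⟨rtrans ht hgh a, rtrans ht b hhg⟩
  have e1 : r (h + -g) (g + -g) := h2 h g (-g) hhg (by rintro ⟨a, b⟩; exact hns ⟨a, b⟩)
  have e2 : r (g + -g) (h + -g) := h2 g h (-g) hgh hns2
  have : h + -g = 0 := h1 _ (by simpa using e1) (by simpa using e2)
  exact hne (add_neg_eq_zero.mp this)

/-- Elements not in the carrier are v-type. -/
theorem char (ht : TotalQO r) (h1 : AxQ1 r) (h2 : AxQ2 r) {g : G}
    (hgn : ¬ r g 0) (hgn' : ¬ r (-g) 0) : Vt r g := by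
  have hg0 : g ≠ 0 := by rintro rfl; exact hgn (rrefl ht 0)
  have h0g : r 0 g := rtot' ht hgn
  have h0ng : r 0 (-g) := rtot' ht hgn'
  refine ⟨?_, hg0⟩
  by_contra hns
  have hns' : ¬ (r (-g) g ∧ r g (-g)) := by rintro ⟨a, b⟩; exact hns ⟨b, a⟩
  have := h2 0 (-g) g h0ng hns'
  simp only [zero_add, neg_add_cancel] at this
  exact hgn this

theorem Vt_neg (ht : TotalQO r) {g : G} (hv : Vt r g) : Vt r (-g) := by
  obtain ⟨⟨a, b⟩, hne⟩ := hv
  exact ⟨⟨by simpa using b, by simpa using a⟩, by simpa using hne⟩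

theorem Vnot0 (ht : TotalQO r) (h1 : AxQ1 r) (h2 : AxQ2 r) {g : G} (hv : Vt r g) :
    ¬ r g 0 := by
  intro hg0
  have h0ng : r 0 (-g) := factA ht h1 h2 hg0
  have : r 0 g := rtrans ht h0ng hv.1.2
  exact hv.2 (h1 g hg0 this)

theorem V0lt (ht : TotalQO r) (h1 : AxQ1 r) (h2 : AxQ2 r) {g : G} (hv : Vt r g) :
    r 0 g := rtot' ht (Vnot0 ht h1 h2 hv)

/-- v-type elements are not `∼` to carrier elements. -/
theorem simH_false (ht : TotalQO r) (h1 : AxQ1 r) (h2 : AxQ2 r) {a s : G}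
    (hs : r s 0 ∨ r (-s) 0) (has : r a s) (hsa : r s a) (hv : Vt r a) : False := by
  have hane : a ≠ s := by
    rintro rfl
    rcases hs with h | h
    · exact Vnot0 ht h1 h2 hv h
    · exact Vnot0 ht h1 h2 (Vt_neg ht hv) h
  have hsim : r s (-s) ∧ r (-s) s := D1 ht h1 h2 has hsa hane
  have hs0 : s ≠ 0 := by
    rintro rfl
    exact hv.2 (h1 a has hsa)
  have hvs : Vt r s := ⟨hsim, hs0⟩
  rcases hs with h | h
  · exact Vnot0 ht h1 h2 hvs h
  · exact Vnot0 ht h1 h2 (Vt_neg ht hvs) h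

/-- Lemma B: a v-type element is not below any carrier element. -/
theorem lemB (ht : TotalQO r) (h1 : AxQ1 r) (h2 : AxQ2 r) {a s : G}
    (hv : Vt r a) (hs : r s 0 ∨ r (-s) 0) (has : r a s) : False := by
  have hs0 : s ≠ 0 := by
    rintro rfl
    exact Vnot0 ht h1 h2 hv has
  have hnss : ¬ (r s (-s) ∧ r (-s) s) := by
    intro hsim
    have hvs : Vt r s := ⟨hsim, hs0⟩
    rcases hs with h | h
    · exact Vnot0 ht h1 h2 hvs h
    · exact Vnot0 ht h1 h2 (Vt_neg ht hvs) h
  have rna_s : r (-a) s := rtrans ht hv.1.2 has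
  have e5 : r (-a + -s) (s + -s) := h2 (-a) s (-s) rna_s hnss
  have htH : r (-(a + s)) 0 := by
    have : (-a + -s : G) = -(a+s) := by abel
    rw [this] at e5; simpa using e5
  have h0a : r 0 a := V0lt ht h1 h2 hv
  have hnas : ¬ (r a s ∧ r s a) := fun hsim => simH_false ht h1 h2 hs hsim.1 hsim.2 hv
  have e8 : r (0 + s) (a + s) := h2 0 a s h0a hnas
  rw [zero_add] at e8
  have tne : a + s ≠ 0 := by
    intro h0
    have has' : a = -s := by
      have := neg_eq_of_add_eq_zero_left h0
      linear_combination (norm := abel) - this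
    rcases hs with h | h
    · exact Vnot0 ht h1 h2 (Vt_neg ht hv) (by rw [has']; simpa using h)
    · exact Vnot0 ht h1 h2 hv (has' ▸ h)
  have hnt : ¬ (r (a + s) (-(a + s)) ∧ r (-(a + s)) (a + s)) := by
    intro hsim
    exact Vnot0 ht h1 h2 (Vt_neg ht ⟨hsim, tne⟩) htH
  have e9 : r (s + -(a + s)) ((a + s) + -(a + s)) := h2 s (a + s) (-(a + s)) e8 hnt
  have : r (-a) 0 := by
    have h1' : (s + -(a + s) : G) = -a := by abel
    have h2' : ((a + s) + -(a + s) : G) = 0 := by abel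
    rwa [h1', h2'] at e9
  exact Vnot0 ht h1 h2 (Vt_neg ht hv) this

end Basic

section Grp

/-- addition closure for the negative cone -/
theorem Nadd (ht : TotalQO r) (h1 : AxQ1 r) (h2 : AxQ2 r) {x y : G}
    (hx : r x 0) (hy : r y 0) : r (x + y) 0 := by
  by_cases hy0 : y = 0
  · subst hy0; simpa using hx
  · have hn : ¬ (r 0 y ∧ r y 0) := by
      rintro ⟨a, b⟩; exact hy0 (h1 y b a)
    have := h2 x 0 y hx hn
    rw [zero_add] at this
    exact rtrans ht this hy

def Hgrp (ht : TotalQO r) (h1 : AxQ1 r) (h2 : AxQ2 r) : AddSubgroup G where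
  carrier := {g | r g 0 ∨ r (-g) 0}
  zero_mem' := Or.inl (rrefl ht 0)
  neg_mem' := by
    rintro g (h | h)
    · exact Or.inr (by simpa using h)
    · exact Or.inl h
  add_mem' := by
    rintro x y hx hy
    have key : ∀ a b : G, r a 0 → r (-b) 0 → (r (a+b) 0 ∨ r (-(a+b)) 0) := by
      intro a b ha hb
      by_cases hb0 : b = 0
      · subst hb0; left; simpa using ha
      · have hn : ¬ (r 0 b ∧ r b 0) := by
          rintro ⟨p, q⟩; exact hb0 (h1 b q p)
        have e : r (a + b) b := by
          have := h2 a 0 b ha hn; rwa [zero_add] at this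
        by_contra hab
        push_neg at hab
        exact lemB ht h1 h2 (char ht h1 h2 hab.1 hab.2) (Or.inr hb) e
    rcases hx with hx | hx <;> rcases hy with hy | hy
    · exact Or.inl (Nadd ht h1 h2 hx hy)
    · exact key x y hx hy
    · rw [add_comm]; exact key y x hy hx
    · right
      have : (-(x+y) : G) = -x + -y := by abel
      rw [this]; exact Nadd ht h1 h2 hx hy

theorem mem_Hgrp (ht : TotalQO r) (h1 : AxQ1 r) (h2 : AxQ2 r) {g : G} : g ∈ Hgrp ht h1 h2 ↔ (r g 0 ∨ r (-g) 0) := Iff.rfl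

theorem notH_Vt (ht : TotalQO r) (h1 : AxQ1 r) (h2 : AxQ2 r) {a : G} (ha : a ∉ Hgrp ht h1 h2) : Vt r a := by
  rw [mem_Hgrp] at ha; push_neg at ha
  exact char ht h1 h2 ha.1 ha.2

theorem Vt_notH (ht : TotalQO r) (h1 : AxQ1 r) (h2 : AxQ2 r) {a : G} (hv : Vt r a) : a ∉ Hgrp ht h1 h2 := by
  rw [mem_Hgrp]
  rintro (h | h)
  · exact Vnot0 ht h1 h2 hv h
  · exact Vnot0 ht h1 h2 (Vt_neg ht hv) h

/-- Initial segment property. -/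
theorem seg (ht : TotalQO r) (h1 : AxQ1 r) (h2 : AxQ2 r) {s a : G} (hs : s ∈ Hgrp ht h1 h2) (has : r a s) : a ∈ Hgrp ht h1 h2 := by
  by_contra ha
  exact lemB ht h1 h2 (notH_Vt ht h1 h2 ha) hs has

/-- `r` is antisymmetric on `H`. -/
theorem antisymH (ht : TotalQO r) (h1 : AxQ1 r) (h2 : AxQ2 r) {x y : G} (hx : x ∈ Hgrp ht h1 h2) (hy : y ∈ Hgrp ht h1 h2)
    (hxy : r x y) (hyx : r y x) : x = y := by
  by_contra hne
  have hsim := D1 ht h1 h2 hxy hyx hne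
  have hy0 : y ≠ 0 := by
    rintro rfl
    exact hne (h1 x hxy hyx)
  exact Vt_notH ht h1 h2 ⟨hsim, hy0⟩ hy

theorem H2tf (ht : TotalQO r) (h1 : AxQ1 r) (h2 : AxQ2 r) {w : G} (hw : w ∈ Hgrp ht h1 h2) (h2w : w + w = 0) : w = 0 := by
  have hnw : (-w : G) = w := neg_eq_of_add_eq_zero_left h2w
  have hw0 : r w 0 := by
    rcases hw with h | h
    · exact h
    · rwa [hnw] at h
  have := factA ht h1 h2 hw0
  rw [hnw] at this
  exact h1 w hw0 this

/-- Translation inside `H`. -/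
theorem transH (ht : TotalQO r) (h1 : AxQ1 r) (h2 : AxQ2 r) {x y z : G} (hx : x ∈ Hgrp ht h1 h2) (hy : y ∈ Hgrp ht h1 h2)
    (hz : z ∈ Hgrp ht h1 h2) (hxy : r x y) : r (x + z) (y + z) := by
  by_contra hc
  have hsimyz : r y z ∧ r z y := by
    by_contra hn; exact hc (h2 x y z hxy hn)
  have hyz : y = z := antisymH ht h1 h2 hy hz hsimyz.1 hsimyz.2
  subst hyz
  have hxyne : x ≠ y := by rintro rfl; exact hc (rrefl ht _)
  have hnyx : ¬ r y x := fun hyx => hxyne (antisymH ht h1 h2 hx hy hxy hyx)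
  by_cases hy0 : y = 0
  · subst hy0; rw [add_zero, add_zero] at hc; exact hc hxy
  by_cases hyx2 : y = -x
  · subst hyx2
    have e : r (x + x) (-x + x) :=
      h2 x (-x) x hxy (by rintro ⟨a, b⟩; exact hnyx a)
    rw [neg_add_cancel] at e
    have e2 := factA ht h1 h2 e
    apply hc
    have hl : (x + -x : G) = 0 := by abel
    have hr2 : (-x + -x : G) = -(x + x) := by abel
    rw [hl, hr2]
    exact e2
  · have hnsyx : ¬ (r y (-x) ∧ r (-x) y) := fun hsim =>
      hyx2 (antisymH ht h1 h2 hy (neg_mem hx) hsim.1 hsim.2)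
    have e0 : r (x + -x) (y + -x) := h2 x y (-x) hxy hnsyx
    rw [add_neg_cancel] at e0
    by_cases hxy2 : x + y = -x
    · have hn2 : ¬ (r (y + -x) (-x) ∧ r (-x) (y + -x)) := by
        rintro ⟨a, b⟩
        have : y + -x = -x := antisymH ht h1 h2 (add_mem hy (neg_mem hx)) (neg_mem hx) a b
        exact hy0 (by linear_combination (norm := abel) this)
      have e2 : r (0 + -x) ((y + -x) + -x) := h2 0 (y + -x) (-x) e0 hn2
      apply hc
      have hl : (x + y : G) = 0 + -x := by rw [hxy2]; abel
      have hr2 : (y + y : G) = (y + -x) + -x := by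
        have : y = -x + -x := by linear_combination (norm := abel) hxy2
        nth_rewrite 2 [this]; abel
      rw [hl, hr2]
      exact e2
    · have hr' : r (y + y) (x + y) := rtot' ht hc
      have hn2 : ¬ (r (x + y) (-x) ∧ r (-x) (x + y)) := fun hsim =>
        hxy2 (antisymH ht h1 h2 (add_mem hx hy) (neg_mem hx) hsim.1 hsim.2)
      have e3 : r ((y + y) + -x) ((x + y) + -x) := h2 _ _ _ hr' hn2
      have hxx : ((x + y) + -x : G) = y := by abel
      rw [hxx] at e3
      have hnsyy : ¬ (r y (-y) ∧ r (-y) y) := fun hsim =>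
        Vt_notH ht h1 h2 ⟨hsim, hy0⟩ hy
      have e4 : r ((y + y + -x) + -y) (y + -y) := h2 _ y (-y) e3 hnsyy
      have hl4 : ((y + y + -x) + -y : G) = y + -x := by abel
      rw [hl4, add_neg_cancel] at e4
      have hyx0 : y + -x = 0 := h1 _ e4 e0
      exact hxyne (by linear_combination (norm := abel) - hyx0)

end Grp

section Cosets

theorem E1 (ht : TotalQO r) (h1 : AxQ1 r) (h2 : AxQ2 r) {a h : G} (hv : Vt r a) (hh : r h 0) : r (a + h) a := by
  by_cases hh0 : h = 0
  · subst hh0; simpa using rrefl ht a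
  · have hn : ¬ (r 0 a ∧ r a 0) := by
      rintro ⟨p, q⟩; exact Vnot0 ht h1 h2 hv q
    have := h2 h 0 a hh hn
    rw [zero_add, add_comm h a] at this
    exact this

theorem Efull (ht : TotalQO r) (h1 : AxQ1 r) (h2 : AxQ2 r) {a h : G} (hv : Vt r a) (hh : r h 0) : r a (a + h) := by
  have hahH : a + h ∉ Hgrp ht h1 h2 := by
    intro hm
    have : a ∈ Hgrp ht h1 h2 := by
      have hrw : a = (a + h) + -h := by abel
      rw [hrw]
      exact add_mem hm (neg_mem (Or.inl hh))
    exact Vt_notH ht h1 h2 hv this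
  have hvah : Vt r (a + h) := notH_Vt ht h1 h2 hahH
  have s1 : r (-(a + h)) a := rtrans ht hvah.1.2 (E1 ht h1 h2 hv hh)
  have hnsim : ¬ (r a h ∧ r h a) := fun hsim =>
    simH_false ht h1 h2 (Or.inl hh) hsim.1 hsim.2 hv
  have s2 : r (-(a + h) + h) (a + h) := h2 _ a h s1 hnsim
  have hrw : (-(a + h) + h : G) = -a := by abel
  rw [hrw] at s2
  exact rtrans ht hv.1.1 s2

theorem L4 (ht : TotalQO r) (h1 : AxQ1 r) (h2 : AxQ2 r) {a k : G} (ha : a ∉ Hgrp ht h1 h2) (hk : k ∈ Hgrp ht h1 h2) :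
    r (a + k) a ∧ r a (a + k) := by
  have hv : Vt r a := notH_Vt ht h1 h2 ha
  rcases hk with hk | hk
  · exact ⟨E1 ht h1 h2 hv hk, Efull ht h1 h2 hv hk⟩
  · have hakH : a + k ∉ Hgrp ht h1 h2 := by
      intro hm
      exact ha (by
        have hrw : a = (a + k) + -k := by abel
        rw [hrw]
        exact add_mem hm (neg_mem (Or.inr hk)))
    have hvak : Vt r (a + k) := notH_Vt ht h1 h2 hakH
    constructor
    · have := Efull ht h1 h2 hvak hk
      rwa [add_assoc, add_neg_cancel, add_zero] at this
    · have := E1 ht h1 h2 hvak hk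
      rwa [add_assoc, add_neg_cancel, add_zero] at this

theorem cond4 (ht : TotalQO r) (h1 : AxQ1 r) (h2 : AxQ2 r) {g h : G} (hg : g ∉ Hgrp ht h1 h2) (hgh : g - h ∈ Hgrp ht h1 h2) :
    r g h ∧ r h g := by
  have hk : h - g ∈ Hgrp ht h1 h2 := by
    have : (h - g : G) = -(g - h) := by abel
    rw [this]; exact neg_mem hgh
  have := L4 ht h1 h2 hg hk
  rw [add_sub_cancel] at this
  exact ⟨this.2, this.1⟩

theorem lemW (ht : TotalQO r) (h1 : AxQ1 r) (h2 : AxQ2 r) {h : G} (hv : Vt r h) : r (h + h) h := by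
  by_cases hs : r (-h) (h + h) ∧ r (h + h) (-h)
  · exact rtrans ht hs.2 hv.1.2
  · have e := h2 0 (-h) (h + h) (V0lt ht h1 h2 (Vt_neg ht hv)) hs
    rw [zero_add] at e
    have hrw : (-h + (h + h) : G) = h := by abel
    rwa [hrw] at e

theorem lemW' (ht : TotalQO r) (h1 : AxQ1 r) (h2 : AxQ2 r) {x y : G} (hv : Vt r x) (hxy : r x y) (hyx : r y x) : r (x + y) x := by
  by_cases hs : r (-x) (x + y) ∧ r (x + y) (-x)
  · exact rtrans ht hs.2 hv.1.2
  · have e := h2 0 (-x) (x + y) (V0lt ht h1 h2 (Vt_neg ht hv)) hs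
    rw [zero_add] at e
    have hrw : (-x + (x + y) : G) = y := by abel
    rw [hrw] at e
    exact rtrans ht e hyx

theorem lemU (ht : TotalQO r) (h1 : AxQ1 r) (h2 : AxQ2 r) {g h : G} (hg : g ∉ Hgrp ht h1 h2) (hhg : r h g) : r (g + h) g := by
  by_cases hh : h ∈ Hgrp ht h1 h2
  · have hghH : g + h ∉ Hgrp ht h1 h2 := by
      intro hm
      exact hg (by
        have hrw : g = (g + h) + -h := by abel
        rw [hrw]; exact add_mem hm (neg_mem hh))
    have := cond4 ht h1 h2 hghH (by rwa [add_sub_cancel_left])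
    exact this.1
  · have hvh : Vt r h := notH_Vt ht h1 h2 hh
    by_cases hs : r h (g - h) ∧ r (g - h) h
    · have e1 : r g h := by
        have := lemW' ht h1 h2 hvh hs.1 hs.2
        rwa [add_sub_cancel] at this
      have := lemW' ht h1 h2 (notH_Vt ht h1 h2 hg) e1 hhg
      exact this
    · have e := h2 (h + h) h (g - h) (lemW ht h1 h2 hvh) hs
      have hl : (h + h + (g - h) : G) = g + h := by abel
      have hr2 : (h + (g - h) : G) = g := by abel
      rwa [hl, hr2] at e

end Cosets

section QuotRel
variable (ht : TotalQO r) (h1 : AxQ1 r) (h2 : AxQ2 r)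

/-- `H`-elements are below non-`H`-elements. -/
theorem H_lt_V (ht : TotalQO r) (h1 : AxQ1 r) (h2 : AxQ2 r) {g k : G}
    (hg : g ∈ Hgrp ht h1 h2) (hk : k ∉ Hgrp ht h1 h2) : r g k :=
  rtot' ht (fun hkg => lemB ht h1 h2 (notH_Vt ht h1 h2 hk) hg hkg)

def FF (ht : TotalQO r) (h1 : AxQ1 r) (h2 : AxQ2 r) (g h : G) : Prop :=
  g - h ∈ Hgrp ht h1 h2 ∨ (g - h ∉ Hgrp ht h1 h2 ∧ r g h)

theorem Fcongr (ht : TotalQO r) (h1 : AxQ1 r) (h2 : AxQ2 r) {g g' h h' : G}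
    (hgg : g - g' ∈ Hgrp ht h1 h2) (hhh : h - h' ∈ Hgrp ht h1 h2)
    (hf : FF ht h1 h2 g h) : FF ht h1 h2 g' h' := by
  have hid : (g' - h' : G) = ((g - h) - (g - g')) + (h - h') := by abel
  rcases hf with hgh | ⟨hgh, hr⟩
  · exact Or.inl (by rw [hid]; exact add_mem (sub_mem hgh hgg) hhh)
  · have hg'h' : g' - h' ∉ Hgrp ht h1 h2 := by
      intro m
      exact hgh (by
        have : (g - h : G) = (g' - h') + (g - g') - (h - h') := by abel
        rw [this]; exact sub_mem (add_mem m hgg) hhh)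
    refine Or.inr ⟨hg'h', ?_⟩
    by_cases hgH : g ∈ Hgrp ht h1 h2
    · have hhH : h ∉ Hgrp ht h1 h2 := fun m => hgh (sub_mem hgH m)
      have hg'H : g' ∈ Hgrp ht h1 h2 := by
        have : (g' : G) = g - (g - g') := by abel
        rw [this]; exact sub_mem hgH hgg
      have hh'H : h' ∉ Hgrp ht h1 h2 := fun m => hhH (by
        have : (h : G) = (h - h') + h' := by abel
        rw [this]; exact add_mem hhh m)
      exact H_lt_V ht h1 h2 hg'H hh'H
    · have hg'H : g' ∉ Hgrp ht h1 h2 := fun m => hgH (by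
        have : (g : G) = (g - g') + g' := by abel
        rw [this]; exact add_mem hgg m)
      have simg := cond4 ht h1 h2 hgH hgg
      by_cases hhH : h ∈ Hgrp ht h1 h2
      · exact absurd hr (fun hr' => lemB ht h1 h2 (notH_Vt ht h1 h2 hgH) hhH hr')
      · have simh := cond4 ht h1 h2 hhH hhh
        exact rtrans ht (rtrans ht simg.2 hr) simh.1

theorem Frefl (g : G) : FF ht h1 h2 g g := Or.inl (by simpa using zero_mem (Hgrp ht h1 h2))

theorem Ftotal (g h : G) : FF ht h1 h2 g h ∨ FF ht h1 h2 h g := by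
  by_cases hgh : g - h ∈ Hgrp ht h1 h2
  · exact Or.inl (Or.inl hgh)
  · have hhg : h - g ∉ Hgrp ht h1 h2 := fun m => hgh (by
      have : (g - h : G) = -(h - g) := by abel
      rw [this]; exact neg_mem m)
    rcases ht.2.2 g h with hr | hr
    · exact Or.inl (Or.inr ⟨hgh, hr⟩)
    · exact Or.inr (Or.inr ⟨hhg, hr⟩)

theorem Ftrans {g h k : G} (f1 : FF ht h1 h2 g h) (f2 : FF ht h1 h2 h k) :
    FF ht h1 h2 g k := by
  rcases f1 with hgh | ⟨hgh, rgh⟩ <;> rcases f2 with hhk | ⟨hhk, rhk⟩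
  · exact Or.inl (by
      have : (g - k : G) = (g - h) + (h - k) := by abel
      rw [this]; exact add_mem hgh hhk)
  · have gkN : g - k ∉ Hgrp ht h1 h2 := fun m => hhk (by
      have : (h - k : G) = -(g - h) + (g - k) := by abel
      rw [this]; exact add_mem (neg_mem hgh) m)
    refine Or.inr ⟨gkN, ?_⟩
    by_cases hH : h ∈ Hgrp ht h1 h2
    · have kH : k ∉ Hgrp ht h1 h2 := fun m => hhk (sub_mem hH m)
      have gH : g ∈ Hgrp ht h1 h2 := by
        have : (g : G) = (g - h) + h := by abel
        rw [this]; exact add_mem hgh hH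
      exact H_lt_V ht h1 h2 gH kH
    · have gnH : g ∉ Hgrp ht h1 h2 := fun m => hH (by
        have : (h : G) = -(g - h) + g := by abel
        rw [this]; exact add_mem (neg_mem hgh) m)
      exact rtrans ht (cond4 ht h1 h2 gnH hgh).1 rhk
  · have gkN : g - k ∉ Hgrp ht h1 h2 := fun m => hgh (by
      have : (g - h : G) = (g - k) + -(h - k) := by abel
      rw [this]; exact add_mem m (neg_mem hhk))
    refine Or.inr ⟨gkN, ?_⟩
    by_cases hH : h ∈ Hgrp ht h1 h2
    · have gnH : g ∉ Hgrp ht h1 h2 := fun m => hgh (sub_mem m hH)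
      exact absurd rgh (fun hr' => lemB ht h1 h2 (notH_Vt ht h1 h2 gnH) hH hr')
    · have knH : k ∉ Hgrp ht h1 h2 := fun m => hH (by
        have : (h : G) = (h - k) + k := by abel
        rw [this]; exact add_mem hhk m)
      exact rtrans ht rgh (cond4 ht h1 h2 hH hhk).1
  · have rgk := rtrans ht rgh rhk
    by_cases gk : g - k ∈ Hgrp ht h1 h2
    · exact Or.inl gk
    · exact Or.inr ⟨gk, rgk⟩

def RQ (ht : TotalQO r) (h1 : AxQ1 r) (h2 : AxQ2 r) :
    (G ⧸ Hgrp ht h1 h2) → (G ⧸ Hgrp ht h1 h2) → Prop :=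
  fun α β => ∃ g h : G, α = (g : G ⧸ Hgrp ht h1 h2) ∧ β = (h : G ⧸ Hgrp ht h1 h2) ∧
    FF ht h1 h2 g h

theorem RQ_mk {g h : G} : RQ ht h1 h2 (g : G ⧸ Hgrp ht h1 h2) (h : G ⧸ Hgrp ht h1 h2) ↔
    FF ht h1 h2 g h := by
  constructor
  · rintro ⟨g', h', hg', hh', hf⟩
    have e1 : g' - g ∈ Hgrp ht h1 h2 := (QuotientAddGroup.eq_iff_sub_mem).mp hg'.symm
    have e2 : h' - h ∈ Hgrp ht h1 h2 := (QuotientAddGroup.eq_iff_sub_mem).mp hh'.symm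
    exact Fcongr ht h1 h2 e1 e2 hf
  · intro hf
    exact ⟨g, h, rfl, rfl, hf⟩

theorem RQrefl (α : G ⧸ Hgrp ht h1 h2) : RQ ht h1 h2 α α := by
  induction α using QuotientAddGroup.induction_on with
  | H g => exact (RQ_mk ht h1 h2).mpr (Frefl ht h1 h2 g)

theorem RQtrans {α β γ : G ⧸ Hgrp ht h1 h2} (hab : RQ ht h1 h2 α β)
    (hbc : RQ ht h1 h2 β γ) : RQ ht h1 h2 α γ := by
  obtain ⟨g, h, rfl, rfl, f1⟩ := hab
  obtain ⟨h', k, hh', rfl, f2⟩ := hbc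
  have e : h' - h ∈ Hgrp ht h1 h2 := (QuotientAddGroup.eq_iff_sub_mem).mp hh'.symm
  have f2' : FF ht h1 h2 h k :=
    Fcongr ht h1 h2 e (by simpa using zero_mem (Hgrp ht h1 h2)) f2
  exact (RQ_mk ht h1 h2).mpr (Ftrans ht h1 h2 f1 f2')

theorem RQtotal (α β : G ⧸ Hgrp ht h1 h2) : RQ ht h1 h2 α β ∨ RQ ht h1 h2 β α := by
  induction α using QuotientAddGroup.induction_on with
  | H g =>
    induction β using QuotientAddGroup.induction_on with
    | H h =>
      rcases Ftotal ht h1 h2 g h with f | f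
      · exact Or.inl ((RQ_mk ht h1 h2).mpr f)
      · exact Or.inr ((RQ_mk ht h1 h2).mpr f)

def sQ (ht : TotalQO r) (h1 : AxQ1 r) (h2 : AxQ2 r) : Setoid (G ⧸ Hgrp ht h1 h2) where
  r a b := RQ ht h1 h2 a b ∧ RQ ht h1 h2 b a
  iseqv := ⟨fun a => ⟨RQrefl ht h1 h2 a, RQrefl ht h1 h2 a⟩,
    fun h => ⟨h.2, h.1⟩,
    fun hab hbc => ⟨RQtrans ht h1 h2 hab.1 hbc.1, RQtrans ht h1 h2 hbc.2 hab.2⟩⟩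

abbrev Gam (ht : TotalQO r) (h1 : AxQ1 r) (h2 : AxQ2 r) : Type u := Quotient (sQ ht h1 h2)

def leG (ht : TotalQO r) (h1 : AxQ1 r) (h2 : AxQ2 r) : Gam ht h1 h2 → Gam ht h1 h2 → Prop :=
  Quotient.lift₂ (fun a b => RQ ht h1 h2 b a) (by
    intro a b a' b' ha hb
    refine propext ⟨fun hr => ?_, fun hr => ?_⟩
    · exact RQtrans ht h1 h2 (RQtrans ht h1 h2 hb.2 hr) ha.1
    · exact RQtrans ht h1 h2 (RQtrans ht h1 h2 hb.1 hr) ha.2)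

noncomputable def LO (ht : TotalQO r) (h1 : AxQ1 r) (h2 : AxQ2 r) :
    LinearOrder (Gam ht h1 h2) where
  le := leG ht h1 h2
  le_refl a := Quotient.inductionOn a (fun α => RQrefl ht h1 h2 α)
  le_trans a b c := Quotient.inductionOn₃ a b c
    (fun α β γ h1' h2' => RQtrans ht h1 h2 h2' h1')
  le_antisymm a b := Quotient.inductionOn₂ a b
    (fun α β h1' h2' => Quotient.sound ⟨h2', h1'⟩)
  le_total a b := Quotient.inductionOn₂ a b (fun α β => RQtotal ht h1 h2 β α)
  toDecidableLE := fun _ _ => Classical.dec _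

open Classical in
noncomputable def vQ (ht : TotalQO r) (h1 : AxQ1 r) (h2 : AxQ2 r) :
    (G ⧸ Hgrp ht h1 h2) → WithTop (Gam ht h1 h2) :=
  fun α => if α = 0 then ⊤ else (↑(Quotient.mk (sQ ht h1 h2) α) : WithTop (Gam ht h1 h2))

theorem vQ_eq_top_iff (α : G ⧸ Hgrp ht h1 h2) : vQ ht h1 h2 α = ⊤ ↔ α = 0 := by
  unfold vQ
  split_ifs with h
  · simp [h]
  · simp [h, WithTop.coe_ne_top]

theorem vQ_of_ne {α : G ⧸ Hgrp ht h1 h2} (h : α ≠ 0) :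
    vQ ht h1 h2 α = (↑(Quotient.mk (sQ ht h1 h2) α) : WithTop (Gam ht h1 h2)) := by
  unfold vQ; rw [if_neg h]

end QuotRel
end StructAux

/-- Structure theorem, second version: a total quasi-order `≾`
on an abelian group `G` satisfies (Q1) and (Q2) iff `G` has a subgroup `H`
such that (1) `H` is an initial segment, (2) `(H, ≾)` is an ordered abelian
group, (3') `≾` induces a well-defined valuational quasi-order on `G ⧸ H` via
`g + H ≾ h + H ↔ g - h ∈ H ∨ (g - h ∉ H ∧ g ≾ h)`, and (4) `g ∉ H` and
`g - h ∈ H` imply `g ∼ h`. -/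
theorem structure_theorem_second_version (r : G → G → Prop) (htqo : TotalQO r) :
    (AxQ1 r ∧ AxQ2 r) ↔
    ∃ H : AddSubgroup G,
      (∀ s ∈ H, ∀ a : G, r a s → a ∈ H) ∧
      ((∀ x y : G, x ∈ H → y ∈ H → r x y → r y x → x = y) ∧
        (∀ x y z : G, x ∈ H → y ∈ H → z ∈ H → r x y → r (x + z) (y + z))) ∧
      (∃ R : G ⧸ H → G ⧸ H → Prop,
        (∀ g h : G, R (g : G ⧸ H) (h : G ⧸ H) ↔
          (g - h ∈ H ∨ (g - h ∉ H ∧ r g h))) ∧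
        Valuational R) ∧
      (∀ g h : G, g ∉ H → g - h ∈ H → (r g h ∧ r h g)) := by
  classical
  constructor
  · rintro ⟨h1, h2⟩
    refine ⟨StructAux.Hgrp htqo h1 h2,
      fun s hs a has => StructAux.seg htqo h1 h2 hs has,
      ⟨fun x y hx hy hxy hyx => StructAux.antisymH htqo h1 h2 hx hy hxy hyx,
        fun x y z hx hy hz hxy => StructAux.transH htqo h1 h2 hx hy hz hxy⟩,
      ⟨StructAux.RQ htqo h1 h2, fun g h => StructAux.RQ_mk htqo h1 h2, ?_⟩,
      fun g h hg hgh => StructAux.cond4 htqo h1 h2 hg hgh⟩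
    letI := StructAux.LO htqo h1 h2
    refine ⟨StructAux.Gam htqo h1 h2, StructAux.LO htqo h1 h2, StructAux.vQ htqo h1 h2,
      ⟨fun α => StructAux.vQ_eq_top_iff htqo h1 h2 α, ?_, ?_⟩, ?_⟩
    · -- v (-α) = v α
      intro α
      induction α using QuotientAddGroup.induction_on with
      | H g =>
        by_cases hg : g ∈ StructAux.Hgrp htqo h1 h2
        · have e1 : ((g : G ⧸ StructAux.Hgrp htqo h1 h2)) = 0 :=
            (QuotientAddGroup.eq_zero_iff g).mpr hg
          rw [e1, neg_zero]
        · have h1' : ((g : G ⧸ StructAux.Hgrp htqo h1 h2)) ≠ 0 := by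
            rwa [Ne, QuotientAddGroup.eq_zero_iff]
          have h2' : (((-g : G) : G ⧸ StructAux.Hgrp htqo h1 h2)) ≠ 0 := by
            rw [Ne, QuotientAddGroup.eq_zero_iff]
            simpa using hg
          have hneg : (-(g : G ⧸ StructAux.Hgrp htqo h1 h2)) =
              ((-g : G) : G ⧸ StructAux.Hgrp htqo h1 h2) := rfl
          rw [hneg, StructAux.vQ_of_ne htqo h1 h2 h2', StructAux.vQ_of_ne htqo h1 h2 h1']
          congr 1
          apply Quotient.sound
          have hv : StructAux.Vt r g := StructAux.notH_Vt htqo h1 h2 hg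
          by_cases m2 : (-g) - g ∈ StructAux.Hgrp htqo h1 h2
          · exact ⟨(StructAux.RQ_mk htqo h1 h2).mpr (Or.inl m2),
              (StructAux.RQ_mk htqo h1 h2).mpr (Or.inl (by
                have : (g - -g : G) = -((-g) - g) := by abel
                rw [this]; exact neg_mem m2))⟩
          · have m2' : (g - -g : G) ∉ StructAux.Hgrp htqo h1 h2 := by
              intro m
              exact m2 (by
                have : ((-g) - g : G) = -(g - -g) := by abel
                rw [this]; exact neg_mem m)
            exact ⟨(StructAux.RQ_mk htqo h1 h2).mpr (Or.inr ⟨m2, hv.1.2⟩),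
              (StructAux.RQ_mk htqo h1 h2).mpr (Or.inr ⟨m2', hv.1.1⟩)⟩
    · -- ultrametric
      intro α β
      induction α using QuotientAddGroup.induction_on with
      | H g =>
      induction β using QuotientAddGroup.induction_on with
      | H h =>
        have hadd : ((g : G ⧸ StructAux.Hgrp htqo h1 h2)) + (h : G ⧸ StructAux.Hgrp htqo h1 h2)
            = ((g + h : G) : G ⧸ StructAux.Hgrp htqo h1 h2) := rfl
        rw [hadd]
        by_cases hg : g ∈ StructAux.Hgrp htqo h1 h2
        · have e : ((g + h : G) : G ⧸ StructAux.Hgrp htqo h1 h2) = (h : G) := by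
            apply QuotientAddGroup.eq_iff_sub_mem.mpr
            simpa using hg
          rw [e]
          exact inf_le_right
        · by_cases hh : h ∈ StructAux.Hgrp htqo h1 h2
          · have e : ((g + h : G) : G ⧸ StructAux.Hgrp htqo h1 h2) = (g : G) := by
              apply QuotientAddGroup.eq_iff_sub_mem.mpr
              simpa using hh
            rw [e]
            exact inf_le_left
          · by_cases hgh : g + h ∈ StructAux.Hgrp htqo h1 h2
            · have e : ((g + h : G) : G ⧸ StructAux.Hgrp htqo h1 h2) = 0 :=
                (QuotientAddGroup.eq_zero_iff _).mpr hgh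
              rw [e]
              have : StructAux.vQ htqo h1 h2 (0 : G ⧸ StructAux.Hgrp htqo h1 h2) = ⊤ :=
                (StructAux.vQ_eq_top_iff htqo h1 h2 0).mpr rfl
              rw [this]
              exact le_top
            · -- helper to compare values
              have hle : ∀ a b : G, a ∉ StructAux.Hgrp htqo h1 h2 →
                  b ∉ StructAux.Hgrp htqo h1 h2 → StructAux.FF htqo h1 h2 a b →
                  StructAux.vQ htqo h1 h2 (b : G ⧸ StructAux.Hgrp htqo h1 h2) ≤
                  StructAux.vQ htqo h1 h2 (a : G ⧸ StructAux.Hgrp htqo h1 h2) := by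
                intro a b ha hb hf
                have ha' : ((a : G ⧸ StructAux.Hgrp htqo h1 h2)) ≠ 0 := by
                  rwa [Ne, QuotientAddGroup.eq_zero_iff]
                have hb' : ((b : G ⧸ StructAux.Hgrp htqo h1 h2)) ≠ 0 := by
                  rwa [Ne, QuotientAddGroup.eq_zero_iff]
                rw [StructAux.vQ_of_ne htqo h1 h2 ha', StructAux.vQ_of_ne htqo h1 h2 hb',
                  WithTop.coe_le_coe]
                exact (StructAux.RQ_mk htqo h1 h2).mpr hf
              rcases StructAux.Ftotal htqo h1 h2 g h with f | f
              · -- F g h : v h ≤ v g, so min = v h; show v h ≤ v (g+h)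
                have rgh : r g h := by
                  rcases f with m | ⟨_, hr⟩
                  · exact (StructAux.cond4 htqo h1 h2 hg m).1
                  · exact hr
                have rU : r (g + h) h := by
                  have := StructAux.lemU htqo h1 h2 hh rgh
                  rwa [add_comm h g] at this
                have hf2 : StructAux.FF htqo h1 h2 (g + h) h := by
                  refine Or.inr ⟨?_, rU⟩
                  simpa using hg
                exact le_trans inf_le_right (hle (g+h) h hgh hh hf2)
              · have rhg : r h g := by
                  rcases f with m | ⟨_, hr⟩
                  · exact (StructAux.cond4 htqo h1 h2 hh m).1
                  · exact hr
                have rU : r (g + h) g := StructAux.lemU htqo h1 h2 hg rhg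
                have hf2 : StructAux.FF htqo h1 h2 (g + h) g := by
                  refine Or.inr ⟨?_, rU⟩
                  simpa using hh
                exact le_trans inf_le_left (hle (g+h) g hgh hg hf2)
    · -- R α β ↔ v β ≤ v α
      intro α β
      induction α using QuotientAddGroup.induction_on with
      | H g =>
      induction β using QuotientAddGroup.induction_on with
      | H k =>
        by_cases hk : k ∈ StructAux.Hgrp htqo h1 h2
        · have ek : StructAux.vQ htqo h1 h2 (k : G ⧸ StructAux.Hgrp htqo h1 h2) = ⊤ :=
            (StructAux.vQ_eq_top_iff htqo h1 h2 _).mpr ((QuotientAddGroup.eq_zero_iff k).mpr hk)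
          rw [ek, top_le_iff, StructAux.vQ_eq_top_iff htqo h1 h2, QuotientAddGroup.eq_zero_iff]
          refine (StructAux.RQ_mk htqo h1 h2).trans ⟨?_, ?_⟩
          · rintro (m | ⟨n, rgk⟩)
            · have : (g : G) = (g - k) + k := by abel
              rw [this]; exact add_mem m hk
            · have hgH : g ∉ StructAux.Hgrp htqo h1 h2 := fun m => n (sub_mem m hk)
              exact absurd rgk
                (fun hr => StructAux.lemB htqo h1 h2 (StructAux.notH_Vt htqo h1 h2 hgH) hk hr)
          · intro hgH
            exact Or.inl (sub_mem hgH hk)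
        · by_cases hg : g ∈ StructAux.Hgrp htqo h1 h2
          · have hRgk : StructAux.RQ htqo h1 h2 (g : G ⧸ StructAux.Hgrp htqo h1 h2) (k : _) := by
              refine (StructAux.RQ_mk htqo h1 h2).mpr (Or.inr ⟨?_, ?_⟩)
              · intro m
                exact hk (by
                  have : (k : G) = g - (g - k) := by abel
                  rw [this]; exact sub_mem hg m)
              · exact StructAux.H_lt_V htqo h1 h2 hg hk
            have eg : StructAux.vQ htqo h1 h2 (g : G ⧸ StructAux.Hgrp htqo h1 h2) = ⊤ :=
              (StructAux.vQ_eq_top_iff htqo h1 h2 _).mpr ((QuotientAddGroup.eq_zero_iff g).mpr hg)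
            exact iff_of_true hRgk (by rw [eg]; exact le_top)
          · have hg' : ((g : G ⧸ StructAux.Hgrp htqo h1 h2)) ≠ 0 := by
              rwa [Ne, QuotientAddGroup.eq_zero_iff]
            have hk' : ((k : G ⧸ StructAux.Hgrp htqo h1 h2)) ≠ 0 := by
              rwa [Ne, QuotientAddGroup.eq_zero_iff]
            rw [StructAux.vQ_of_ne htqo h1 h2 hk', StructAux.vQ_of_ne htqo h1 h2 hg',
              WithTop.coe_le_coe]
            exact (StructAux.RQ_mk htqo h1 h2).trans
              ⟨fun hf => (StructAux.RQ_mk htqo h1 h2).mpr hf,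
               fun hf => (StructAux.RQ_mk htqo h1 h2).mp hf⟩
  · rintro ⟨H, hseg, ⟨hanti, htr⟩, ⟨R, hR, Γ, LOi, v, ⟨hv1, hv2, hv3⟩, hiff⟩, h4⟩
    letI := LOi
    constructor
    · -- AxQ1
      intro x hx0 h0x
      by_cases hx : x ∈ H
      · exact hanti x 0 hx (zero_mem H) hx0 h0x
      · exact absurd (hseg 0 (zero_mem H) x hx0) hx
    · -- AxQ2
      intro x y z hxy hnyz
      set V : G → WithTop Γ := fun g => v (g : G ⧸ H) with hV
      have hVtop : ∀ g : G, V g = ⊤ ↔ g ∈ H := fun g =>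
        (hv1 _).trans (QuotientAddGroup.eq_zero_iff g)
      have hmkeq : ∀ {g h : G}, g - h ∈ H → V g = V h := by
        intro g h m
        simp only [hV]
        rw [QuotientAddGroup.eq_iff_sub_mem.mpr m]
      have hc : ∀ {g h : G}, r g h → V h ≤ V g := by
        intro g h hr
        by_cases m : g - h ∈ H
        · exact le_of_eq (hmkeq m).symm
        · exact (hiff _ _).mp ((hR g h).mpr (Or.inr ⟨m, hr⟩))
      have hd : ∀ {g h : G}, V h < V g → r g h := by
        intro g h hlt
        have m : g - h ∉ H := fun m => absurd (hmkeq m) (ne_of_gt hlt)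
        have : R (g : G ⧸ H) (h : G ⧸ H) := (hiff _ _).mpr (le_of_lt hlt)
        rcases (hR g h).mp this with m' | ⟨_, hr⟩
        · exact absurd m' m
        · exact hr
      have he : ∀ {g h : G}, g ∉ H → V g = V h → r g h := by
        intro g h hg heq
        by_cases m : g - h ∈ H
        · exact (h4 g h hg m).1
        · have : R (g : G ⧸ H) (h : G ⧸ H) := (hiff _ _).mpr (le_of_eq heq.symm)
          rcases (hR g h).mp this with m' | ⟨_, hr⟩
          · exact absurd m' m
          · exact hr
      have hult : ∀ g h : G, min (V g) (V h) ≤ V (g + h) := fun g h => hv3 _ _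
      have hVneg : ∀ g : G, V (-g) = V g := fun g => hv2 (g : G ⧸ H)
      have hstrict : ∀ {g h : G}, V h < V g → V (g + h) = V h := by
        intro g h hlt
        have le1 : V h ≤ V (g + h) := by
          have := hult g h
          rwa [inf_eq_right.mpr (le_of_lt hlt)] at this
        have le2 : V (g + h) ≤ V h := by
          have h3 := hult (g + h) (-g)
          rw [hVneg] at h3
          have hgh : ((g + h) + -g : G) = h := by abel
          rw [hgh] at h3
          by_contra hcon
          push_neg at hcon
          have : V h < min (V (g + h)) (V g) := lt_inf_iff.mpr ⟨hcon, hlt⟩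
          exact absurd h3 (not_le_of_gt this)
        exact le_antisymm le2 le1
      by_cases hyzH : y ∈ H ∧ z ∈ H
      · exact htr x y z (hseg y hyzH.1 x hxy) hyzH.1 hyzH.2 hxy
      · have hVyz : V y ≠ V z := by
          intro heq
          by_cases hy : y ∈ H
          · by_cases hz : z ∈ H
            · exact hyzH ⟨hy, hz⟩
            · exact hz ((hVtop z).mp (heq ▸ (hVtop y).mpr hy))
          · have hz : z ∉ H := fun hz => hy ((hVtop y).mp (heq.symm ▸ (hVtop z).mpr hz))
            exact hnyz ⟨he hy heq, he hz heq.symm⟩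
        have hVxy : V y ≤ V x := hc hxy
        rcases lt_or_gt_of_ne hVyz with hlt | hlt
        · -- V y < V z : V (y+z) = V y
          have e1 : V (y + z) = V y := by
            have := hstrict (g := z) (h := y) hlt
            rwa [add_comm z y] at this
          have e2 : V y ≤ V (x + z) :=
            le_trans (le_inf hVxy (le_of_lt hlt)) (hult x z)
          have hyt : V y ≠ ⊤ := fun h' => not_top_lt (h' ▸ hlt)
          rcases eq_or_lt_of_le (e1 ▸ e2 : V (y + z) ≤ V (x + z)) with heq | hlt2
          · have hxznH : x + z ∉ H := by
              rw [← hVtop]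
              rw [← heq, e1]
              exact hyt
            exact he hxznH heq.symm
          · exact hd hlt2
        · -- V z < V y : V (y+z) = V z = V (x+z)
          have e1 : V (y + z) = V z := hstrict (g := y) (h := z) hlt
          have e2 : V (x + z) = V z := hstrict (lt_of_lt_of_le hlt hVxy)
          have hzt : V z ≠ ⊤ := fun h' => not_top_lt (h' ▸ hlt)
          have hxznH : x + z ∉ H := by
            rw [← hVtop, e2]
            exact hzt
          exact he hxznH (e2.trans e1.symm)
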